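/- Consider the enumeration algorithm on a finite acyclic digraph D with origin o and destination d: a list L of partial paths initially contains the empty path at o; repeatedly a path P ending at some vertex v is extracted from L; if v = d the incumbent upper bound c_od^UB is updated to min(c_od^UB, c(q_P)) when ρ(q_P) = 0; otherwise P is extended along every outgoing arc and the extensions are added to L (possibly some extensions are skipped by the lower-bound test (Low) and/or dominance test (Dom)). Then the algorithm terminates after finitely many iterations, and upon termination c_od^UB equals the minimum of c(q_P) over feasible o-d paths P (ρ(q_P)=0), or +∞ if no feasible o-d path exists. -/

import Mathlib

/-- Directed walks in a digraph given by its arc relation `A`. -/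
inductive Walk {V : Type*} (A : V → V → Prop) : V → V → Type _
  | nil (v : V) : Walk A v v
  | cons {u v w : V} (h : A u v) (t : Walk A v w) : Walk A u w

namespace Walk

variable {V : Type*} {A : V → V → Prop} {M : Type*}

/-- The resource of a walk. -/
def res (op : M → M → M) (e : M) (q : V → V → M) : ∀ {u w : V}, Walk A u w → M
  | _, _, .nil _ => e
  | _, _, @Walk.cons _ _ u v _ _ t => op (q u v) (res op e q t)

/-- Concatenation of walks. -/
def append : ∀ {u v w : V}, Walk A u v → Walk A v w → Walk A u w
  | _, _, _, .nil _, Q => Q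
  | _, _, _, .cons h t, Q => .cons h (append t Q)

/-- The list of arcs (darts) of a walk. -/
def darts : ∀ {u w : V}, Walk A u w → List (V × V)
  | _, _, .nil _ => []
  | _, _, @Walk.cons _ _ u v _ _ t => (u, v) :: darts t

end Walk

/-- A state of the enumeration algorithm: the list `L` of pending partial paths, the
list `kept` of already extended partial paths, and the incumbent upper bound `ub`. -/
structure AlgState {V : Type*} (A : V → V → Prop) (o : V) where
  L : List (Σ v : V, Walk A o v)
  kept : List (Σ v : V, Walk A o v)
  ub : WithTop ℝ

/-- One iteration of the enumeration algorithm: a partial path `P` ending at `v` is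
extracted from `L`; if `v = d` the incumbent is updated to `min ub (c q_P)` when
`ρ q_P = 0`; otherwise `P` is either discarded -- which is allowed only when justified
by the lower-bound test (Low) or the dominance test (Dom) -- or extended along every
outgoing arc. -/
def Step {V M : Type*} (A : V → V → Prop) (o d : V)
    (op : M → M → M) (e : M) (le : M → M → Prop) (q : V → V → M)
    (c : M → ℝ) (ρ : M → ℕ) (B : V → Set M) :
    AlgState A o → AlgState A o → Prop := fun s s' =>
  (∃ (P : Walk A o d) (L₁ L₂ : List (Σ v : V, Walk A o v)),
      s.L = L₁ ++ ⟨d, P⟩ :: L₂ ∧ s'.L = L₁ ++ L₂ ∧ s'.kept = s.kept ∧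
      s'.ub = if ρ (P.res op e q) = 0
        then min s.ub (((c (P.res op e q)) : ℝ) : WithTop ℝ) else s.ub)
  ∨ (∃ (v : V) (P : Walk A o v) (L₁ L₂ : List (Σ v : V, Walk A o v)),
      v ≠ d ∧ s.L = L₁ ++ ⟨v, P⟩ :: L₂ ∧ s'.ub = s.ub ∧
      ( -- discard `P`, justified by test (Low) or test (Dom)
        (((∀ b ∈ B v, ρ (op (P.res op e q) b) = 1 ∨
             s.ub < (((c (op (P.res op e q) b)) : ℝ) : WithTop ℝ)) ∨
          (∃ k ∈ s.kept, k.1 = v ∧ le (k.2.res op e q) (P.res op e q))) ∧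
         s'.L = L₁ ++ L₂ ∧ s'.kept = s.kept)
      ∨ -- extend `P` along every outgoing arc of `v`
        (s'.kept = ⟨v, P⟩ :: s.kept ∧
         ∃ ext : List (Σ v : V, Walk A o v),
           s'.L = L₁ ++ L₂ ++ ext ∧
           (∀ x ∈ ext, ∃ (w : V) (h : A v w),
              x = ⟨w, P.append (Walk.cons h (Walk.nil w))⟩) ∧
           (∀ (w : V) (h : A v w),
              (⟨w, P.append (Walk.cons h (Walk.nil w))⟩ : Σ v : V, Walk A o v) ∈ ext))))


namespace Walk

variable {V : Type*} {A : V → V → Prop} {M : Type*}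

theorem res_append (op : M → M → M) (e : M) (q : V → V → M)
    (hassoc : ∀ a b c : M, op (op a b) c = op a (op b c))
    (hneutral : ∀ a : M, op e a = a ∧ op a e = a) :
    ∀ {u v w : V} (P : Walk A u v) (Q : Walk A v w),
      (P.append Q).res op e q = op (P.res op e q) (Q.res op e q)
  | _, _, _, .nil _, Q => by simp [append, res, (hneutral _).1]
  | _, _, _, .cons h t, Q => by
      simp [append, res, res_append op e q hassoc hneutral t Q, hassoc]

theorem darts_append : ∀ {u v w : V} (P : Walk A u v) (Q : Walk A v w),
    (P.append Q).darts = P.darts ++ Q.darts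
  | _, _, _, .nil _, Q => rfl
  | _, _, _, .cons h t, Q => by simp [append, darts, darts_append t Q]

theorem eq_nil_of_darts_eq_nil {v : V} (W : Walk A v v) (h : W.darts = []) : W = .nil v := by
  cases W with
  | nil => rfl
  | cons h' t => simp [darts] at h

theorem exists_cons {a b : V} (Q : Walk A a b) (hab : a ≠ b) :
    ∃ (w : V) (h : A a w) (Q' : Walk A w b), Q = cons h Q' := by
  cases Q with
  | nil => exact absurd rfl hab
  | cons h' t => exact ⟨_, h', t, rfl⟩

def verts : ∀ {u w : V}, Walk A u w → List V
  | _, _, .nil v => [v]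
  | _, _, @Walk.cons _ _ u _ _ _ t => u :: verts t

theorem length_verts : ∀ {u w : V} (W : Walk A u w), W.verts.length = W.darts.length + 1
  | _, _, .nil _ => rfl
  | _, _, .cons _ t => by simp [verts, darts, length_verts t]

theorem split_at_vert : ∀ {v w : V} (t : Walk A v w) (u : V), u ∈ verts t →
    ∃ (t₁ : Walk A v u) (t₂ : Walk A u w), t = t₁.append t₂
  | _, _, .nil x, u, hu => by
      simp [verts] at hu; subst hu; exact ⟨.nil _, .nil _, rfl⟩
  | _, _, @Walk.cons _ _ a b _ h t, u, hu => by
      rcases List.mem_cons.1 hu with h1 | h2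
      · subst h1; exact ⟨.nil _, .cons h t, rfl⟩
      · obtain ⟨t₁, t₂, ht⟩ := split_at_vert t u h2
        exact ⟨.cons h t₁, t₂, by simp [append, ht]⟩

theorem verts_nodup (hacyclic : ∀ (v : V) (W : Walk A v v), W.darts = []) :
    ∀ {u w : V} (W : Walk A u w), W.verts.Nodup
  | _, _, .nil _ => List.nodup_singleton _
  | _, _, @Walk.cons _ _ a b _ h t => by
      refine List.nodup_cons.2 ⟨fun hmem => ?_, verts_nodup hacyclic t⟩
      obtain ⟨t₁, t₂, ht⟩ := split_at_vert t a hmem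
      have := hacyclic a (Walk.cons h t₁)
      simp [darts] at this

theorem darts_length_lt [Fintype V] (hacyclic : ∀ (v : V) (W : Walk A v v), W.darts = [])
    {u w : V} (W : Walk A u w) : W.darts.length + 1 ≤ Fintype.card V := by
  have h1 := (verts_nodup hacyclic W).length_le_card
  rwa [length_verts] at h1

end Walk

section Inv

variable {V M : Type*} {A : V → V → Prop}

/-- Witness predicate: either the incumbent already beats `m`, or the pending list
contains a prefix that can be completed, with resource `⪯ m`, within `n` more arcs. -/
def Wit (op : M → M → M) (e : M) (le : M → M → Prop) (q : V → V → M) (c : M → ℝ)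
    {o : V} (d : V) (s : AlgState A o) (m : M) (n : ℕ) : Prop :=
  s.ub ≤ (((c m) : ℝ) : WithTop ℝ) ∨
  ∃ x ∈ s.L, ∃ Q' : Walk A x.1 d, Q'.darts.length ≤ n ∧
    le (op (x.2.res op e q) (Q'.res op e q)) m

/-- Invariant on kept paths: each completion of a kept path has a strictly shorter witness. -/
def KeptInv (op : M → M → M) (e : M) (le : M → M → Prop) (q : V → V → M) (c : M → ℝ)
    (ρ : M → ℕ) {o : V} (d : V) (s : AlgState A o) : Prop :=
  ∀ k ∈ s.kept, k.1 ≠ d ∧ ∀ Q : Walk A k.1 d,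
    ρ (op (k.2.res op e q) (Q.res op e q)) = 0 →
    ∃ n, n + 1 ≤ Q.darts.length ∧
      Wit op e le q c d s (op (k.2.res op e q) (Q.res op e q)) n

theorem wit_mono {op : M → M → M} {e : M} {le : M → M → Prop} {q : V → V → M} {c : M → ℝ}
    {o : V} {d : V} {s : AlgState A o} {m : M} {n n' : ℕ} (h : Wit op e le q c d s m n)
    (hn : n ≤ n') : Wit op e le q c d s m n' := by
  rcases h with h | ⟨x, hx, Q', h1, h2⟩
  · exact Or.inl h
  · exact Or.inr ⟨x, hx, Q', h1.trans hn, h2⟩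

end Inv

section Pres

variable {V M : Type*} [Fintype V] {A : V → V → Prop}
variable {op : M → M → M} {e : M} {le : M → M → Prop} {q : V → V → M}
variable {c : M → ℝ} {ρ : M → ℕ} {o d : V} {B : V → Set M}

theorem step_pres
    (hacyclic : ∀ (v : V) (W : Walk A v v), W.darts = [])
    (hassoc : ∀ a b c : M, op (op a b) c = op a (op b c))
    (hneutral : ∀ a : M, op e a = a ∧ op a e = a)
    (hrefl : ∀ a : M, le a a)
    (htrans : ∀ a b c : M, le a b → le b c → le a c)
    (hcompL : ∀ a b c : M, le b c → le (op a b) (op a c))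
    (hcompR : ∀ a b c : M, le b c → le (op b a) (op c a))
    (hc : ∀ a b : M, le a b → c a ≤ c b)
    (hρmono : ∀ a b : M, le a b → ρ a ≤ ρ b)
    (hB : ∀ (v : V) (Q : Walk A v d), ∃ b ∈ B v, le b (Q.res op e q))
    {s s' : AlgState A o} (hstep : Step A o d op e le q c ρ B s s')
    (hK : KeptInv op e le q c ρ d s)
    (m : M) (n : ℕ) (hm : ρ m = 0) (hw : Wit op e le q c d s m n) :
    Wit op e le q c d s' m n := by
  have coeC : ∀ a b : M, le a b → (((c a) : ℝ) : WithTop ℝ) ≤ (((c b) : ℝ) : WithTop ℝ) :=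
    fun a b h => WithTop.coe_le_coe.2 (hc a b h)
  have ρ0 : ∀ a : M, le a m → ρ a = 0 := fun a h => by
    have := hρmono a m h; omega
  rcases hstep with ⟨P, L₁, L₂, hsL, hsL', hkept, hub⟩ |
    ⟨v, P, L₁, L₂, hvd, hsL, hub, hrest⟩
  · -- extraction at d
    have hub' : s'.ub ≤ s.ub := by
      rw [hub]; split
      · exact min_le_left _ _
      · exact le_refl _
    rcases hw with hple | ⟨x, hx, Q', hQlen, hle⟩
    · exact Or.inl (hub'.trans hple)
    · rw [hsL] at hx
      simp only [List.mem_append, List.mem_cons] at hx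
      rcases hx with hx | rfl | hx
      · exact Or.inr ⟨x, by rw [hsL']; exact List.mem_append.2 (Or.inl hx), Q', hQlen, hle⟩
      · have hQnil : Q' = Walk.nil d := Walk.eq_nil_of_darts_eq_nil Q' (hacyclic d Q')
        subst hQnil
        have hle' : le (P.res op e q) m := by
          rw [show ((Walk.nil d : Walk A d d).res op e q) = e from rfl,
            (hneutral (P.res op e q)).2] at hle
          exact hle
        have hρP : ρ (P.res op e q) = 0 := ρ0 _ hle'
        left
        rw [hub, if_pos hρP]
        exact le_trans (min_le_right _ _) (coeC _ _ hle')
      · exact Or.inr ⟨x, by rw [hsL']; exact List.mem_append.2 (Or.inr hx), Q', hQlen, hle⟩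
  · -- extraction at v ≠ d
    rcases hw with hple | ⟨x, hx, Q', hQlen, hle⟩
    · left; rw [hub]; exact hple
    · rw [hsL] at hx
      simp only [List.mem_append, List.mem_cons] at hx
      rcases hrest with ⟨hjust, hL', hkept'⟩ | ⟨hkept', ext, hL', hext1, hext2⟩
      · -- discard
        rcases hx with hx | rfl | hx
        · exact Or.inr ⟨x, by rw [hL']; exact List.mem_append.2 (Or.inl hx), Q', hQlen, hle⟩
        · rcases hjust with hLow | ⟨k, hk, hk1, hkle⟩
          · -- (Low) test
            obtain ⟨b, hbB, hble⟩ := hB v Q'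
            have hbm : le (op (P.res op e q) b) m :=
              htrans _ _ _ (hcompL _ _ _ hble) hle
            rcases hLow b hbB with h1 | h2
            · have := ρ0 _ hbm; omega
            · left; rw [hub]
              exact le_of_lt (lt_of_lt_of_le h2 (coeC _ _ hbm))
          · -- (Dom) test
            obtain ⟨kv, K⟩ := k
            have hk1' : kv = v := hk1
            subst hk1'
            have main : ∀ n (Q' : Walk A kv d), Q'.darts.length ≤ n →
                le (op (P.res op e q) (Q'.res op e q)) m →
                Wit op e le q c d s' m n := by
              intro n
              induction n using Nat.strong_induction_on with
              | _ n IH =>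
                intro Q' hlen hlem
                have hkQ : le (op (K.res op e q) (Q'.res op e q)) m :=
                  htrans _ _ _ (hcompR _ _ _ hkle) hlem
                obtain ⟨n', hn', hwk⟩ := (hK ⟨kv, K⟩ hk).2 Q' (ρ0 _ hkQ)
                rcases hwk with hple' | ⟨y, hy, Q'', hQ''len, hley⟩
                · left; rw [hub]; exact hple'.trans (coeC _ _ hkQ)
                · have hleym : le (op (y.2.res op e q) (Q''.res op e q)) m :=
                    htrans _ _ _ hley hkQ
                  rw [hsL] at hy
                  simp only [List.mem_append, List.mem_cons] at hy
                  rcases hy with hy | rfl | hy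
                  · exact Or.inr ⟨y, by rw [hL']; exact List.mem_append.2 (Or.inl hy), Q'',
                      by omega, hleym⟩
                  · exact wit_mono (IH n' (by omega) Q'' hQ''len hleym) (by omega)
                  · exact Or.inr ⟨y, by rw [hL']; exact List.mem_append.2 (Or.inr hy), Q'',
                      by omega, hleym⟩
            exact main n Q' hQlen hle
        · exact Or.inr ⟨x, by rw [hL']; exact List.mem_append.2 (Or.inr hx), Q', hQlen, hle⟩
      · -- extend
        rcases hx with hx | rfl | hx
        · exact Or.inr ⟨x, by rw [hL']; simp [hx], Q', hQlen, hle⟩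
        · obtain ⟨w, harc, Q'', rfl⟩ := Q'.exists_cons hvd
          refine Or.inr ⟨⟨w, P.append (Walk.cons harc (Walk.nil w))⟩,
            by rw [hL']; simp [hext2 w harc], Q'', ?_, ?_⟩
          · have : (Walk.cons harc Q'').darts.length = Q''.darts.length + 1 := rfl
            omega
          · have h2 : op ((P.append (Walk.cons harc (Walk.nil w))).res op e q)
                (Q''.res op e q) = op (P.res op e q) ((Walk.cons harc Q'').res op e q) := by
              rw [Walk.res_append op e q hassoc hneutral]
              show op (op (P.res op e q) (op (q v w) e)) _ = op _ (op (q v w) (Q''.res op e q))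
              rw [(hneutral (q v w)).2, hassoc]
            rw [h2]
            exact hle
        · exact Or.inr ⟨x, by rw [hL']; simp [hx], Q', hQlen, hle⟩

end Pres

set_option linter.unusedSectionVars false
set_option linter.unusedVariables false

section Pres2

variable {V M : Type*} [Fintype V] {A : V → V → Prop}
variable {op : M → M → M} {e : M} {le : M → M → Prop} {q : V → V → M}
variable {c : M → ℝ} {ρ : M → ℕ} {o d : V} {B : V → Set M}

theorem kept_pres
    (hacyclic : ∀ (v : V) (W : Walk A v v), W.darts = [])
    (hassoc : ∀ a b c : M, op (op a b) c = op a (op b c))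
    (hneutral : ∀ a : M, op e a = a ∧ op a e = a)
    (hrefl : ∀ a : M, le a a)
    (htrans : ∀ a b c : M, le a b → le b c → le a c)
    (hcompL : ∀ a b c : M, le b c → le (op a b) (op a c))
    (hcompR : ∀ a b c : M, le b c → le (op b a) (op c a))
    (hc : ∀ a b : M, le a b → c a ≤ c b)
    (hρmono : ∀ a b : M, le a b → ρ a ≤ ρ b)
    (hB : ∀ (v : V) (Q : Walk A v d), ∃ b ∈ B v, le b (Q.res op e q))
    {s s' : AlgState A o} (hstep : Step A o d op e le q c ρ B s s')
    (hK : KeptInv op e le q c ρ d s) :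
    KeptInv op e le q c ρ d s' := by
  have hpres := step_pres hacyclic hassoc hneutral hrefl htrans hcompL hcompR hc hρmono hB
    hstep hK
  have hmain : ∀ k ∈ s.kept, k.1 ≠ d ∧ ∀ Q : Walk A k.1 d,
      ρ (op (k.2.res op e q) (Q.res op e q)) = 0 →
      ∃ n, n + 1 ≤ Q.darts.length ∧
        Wit op e le q c d s' (op (k.2.res op e q) (Q.res op e q)) n := by
    intro k hk
    obtain ⟨hkd, hkQ⟩ := hK k hk
    refine ⟨hkd, fun Q hρQ => ?_⟩
    obtain ⟨n, hn, hw⟩ := hkQ Q hρQ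
    exact ⟨n, hn, hpres _ n hρQ hw⟩
  rcases hstep with ⟨P, L₁, L₂, hsL, hsL', hkept, hub⟩ |
    ⟨v, P, L₁, L₂, hvd, hsL, hub, hrest⟩
  · intro k hk; rw [hkept] at hk; exact hmain k hk
  · rcases hrest with ⟨hjust, hL', hkept'⟩ | ⟨hkept', ext, hL', hext1, hext2⟩
    · intro k hk; rw [hkept'] at hk; exact hmain k hk
    · intro k hk
      rw [hkept'] at hk
      rcases List.mem_cons.1 hk with rfl | hk
      · refine ⟨hvd, fun Q hρQ => ?_⟩
        obtain ⟨w, harc, Q'', rfl⟩ := Q.exists_cons hvd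
        refine ⟨Q''.darts.length, le_refl _, Or.inr
          ⟨⟨w, P.append (Walk.cons harc (Walk.nil w))⟩,
            by rw [hL']; simp [hext2 w harc], Q'', le_refl _, ?_⟩⟩
        have h2 : op ((P.append (Walk.cons harc (Walk.nil w))).res op e q)
            (Q''.res op e q) = op (P.res op e q) ((Walk.cons harc Q'').res op e q) := by
          rw [Walk.res_append op e q hassoc hneutral]
          show op (op (P.res op e q) (op (q v w) e)) _ = op _ (op (q v w) (Q''.res op e q))
          rw [(hneutral (q v w)).2, hassoc]
        rw [h2]
        exact hrefl _
      · exact hmain k hk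

end Pres2

section Term

variable {V M : Type*} [Fintype V] {A : V → V → Prop}
variable {op : M → M → M} {e : M} {le : M → M → Prop} {q : V → V → M}
variable {c : M → ℝ} {ρ : M → ℕ} {o d : V} {B : V → Set M}

/-- The lexicographic count-vector measure strictly decreases along any step. -/
theorem step_decrease
    (hacyclic : ∀ (v : V) (W : Walk A v v), W.darts = [])
    {s s' : AlgState A o} (hstep : Step A o d op e le q c ρ B s s') :
    Pi.Lex (· > ·) (fun {_} => ((· < ·) : ℕ → ℕ → Prop))
      (fun j : Fin (Fintype.card V + 1) =>
        ((s'.L.map (fun x => Fintype.card V - x.2.darts.length)).count (j : ℕ)))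
      (fun j : Fin (Fintype.card V + 1) =>
        ((s.L.map (fun x => Fintype.card V - x.2.darts.length)).count (j : ℕ))) := by
  set K := Fintype.card V with hK
  set wt : (Σ v : V, Walk A o v) → ℕ := fun x => K - x.2.darts.length with hwt
  have key : ∃ (x : Σ v : V, Walk A o v) (L₁ L₂ ext : List (Σ v : V, Walk A o v)),
      s.L = L₁ ++ x :: L₂ ∧ s'.L = L₁ ++ L₂ ++ ext ∧
      ∀ y ∈ ext, y.2.darts.length = x.2.darts.length + 1 := by
    rcases hstep with ⟨P, L₁, L₂, hsL, hsL', -, -⟩ |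
      ⟨v, P, L₁, L₂, hvd, hsL, hub, hrest⟩
    · exact ⟨⟨d, P⟩, L₁, L₂, [], hsL, by rw [hsL', List.append_nil], by simp⟩
    · rcases hrest with ⟨-, hL', -⟩ | ⟨-, ext, hL', hext1, -⟩
      · exact ⟨⟨v, P⟩, L₁, L₂, [], hsL, by rw [hL', List.append_nil], by simp⟩
      · refine ⟨⟨v, P⟩, L₁, L₂, ext, hsL, hL', fun y hy => ?_⟩
        obtain ⟨w, harc, rfl⟩ := hext1 y hy
        show ((P.append (Walk.cons harc (Walk.nil w))).darts).length = P.darts.length + 1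
        rw [Walk.darts_append]
        simp [Walk.darts]
  obtain ⟨x, L₁, L₂, ext, hsL, hsL', hext⟩ := key
  have hl : x.2.darts.length + 1 ≤ K := Walk.darts_length_lt hacyclic x.2
  set l := x.2.darts.length with hldef
  have hcount0 : ∀ j : ℕ, K - (l + 1) < j → (ext.map wt).count j = 0 := by
    intro j hj
    rw [List.count_eq_zero]
    intro hmem
    obtain ⟨y, hy, hwy⟩ := List.mem_map.1 hmem
    have := hext y hy
    have : wt y = K - (l + 1) := by simp only [hwt]; omega
    omega
  refine ⟨⟨K - l, by omega⟩, fun j hj => ?_, ?_⟩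
  · -- counts agree above K - l
    have hj' : (K - l : ℕ) < (j : ℕ) := hj
    have h0 : (ext.map wt).count (j : ℕ) = 0 := hcount0 _ (by omega)
    rw [hsL, hsL']
    simp only [List.map_append, List.map_cons, List.count_append, List.count_cons]
    have : ¬ (wt x = (j : ℕ)) := by simp only [hwt]; omega
    simp only [h0]
    simp [this]
  · -- strict decrease at K - l
    show ((s'.L.map wt).count (K - l)) < ((s.L.map wt).count (K - l))
    have h0 : (ext.map wt).count (K - l) = 0 := hcount0 _ (by omega)
    rw [hsL, hsL']
    simp only [List.map_append, List.map_cons, List.count_append, List.count_cons]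
    have : wt x = (K - l : ℕ) := rfl
    simp [h0, this]

end Term

/-- On a finite acyclic digraph, the enumeration algorithm with the (Low) and (Dom)
tests terminates after finitely many iterations, and upon termination the incumbent
`ub` equals the minimum cost of a feasible `o`-`d` path, or `+∞` if none exists. -/
theorem stmt9 {V M : Type*} [Fintype V] (A : V → V → Prop)
    (hacyclic : ∀ (v : V) (W : Walk A v v), W.darts = [])
    (op : M → M → M) (e : M) (le : M → M → Prop)
    (hassoc : ∀ a b c : M, op (op a b) c = op a (op b c))
    (hneutral : ∀ a : M, op e a = a ∧ op a e = a)
    (hrefl : ∀ a : M, le a a)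
    (htrans : ∀ a b c : M, le a b → le b c → le a c)
    (hantisymm : ∀ a b : M, le a b → le b a → a = b)
    (hcompL : ∀ a b c : M, le b c → le (op a b) (op a c))
    (hcompR : ∀ a b c : M, le b c → le (op b a) (op c a))
    (q : V → V → M)
    (c : M → ℝ) (hc : ∀ a b : M, le a b → c a ≤ c b)
    (ρ : M → ℕ) (hρ01 : ∀ a : M, ρ a = 0 ∨ ρ a = 1)
    (hρmono : ∀ a b : M, le a b → ρ a ≤ ρ b)
    (o d : V) (B : V → Set M)
    (hB : ∀ (v : V) (Q : Walk A v d), ∃ b ∈ B v, le b (Q.res op e q))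
    (init : AlgState A o)
    (hinit : init = ⟨[⟨o, Walk.nil o⟩], [], ⊤⟩) :
    (¬ ∃ f : ℕ → AlgState A o, f 0 = init ∧
        ∀ n : ℕ, Step A o d op e le q c ρ B (f n) (f (n + 1))) ∧
    (∀ s : AlgState A o,
      Relation.ReflTransGen (Step A o d op e le q c ρ B) init s → s.L = [] →
        (∀ P : Walk A o d, ρ (P.res op e q) = 0 →
            s.ub ≤ (((c (P.res op e q)) : ℝ) : WithTop ℝ)) ∧
        ((¬ ∃ P : Walk A o d, ρ (P.res op e q) = 0) → s.ub = ⊤) ∧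
        ((∃ P : Walk A o d, ρ (P.res op e q) = 0) →
          ∃ P : Walk A o d, ρ (P.res op e q) = 0 ∧
            s.ub = (((c (P.res op e q)) : ℝ) : WithTop ℝ))) := by
  constructor
  · -- termination
    rintro ⟨f, hf0, hfs⟩
    have hwf := Pi.Lex.wellFounded
      (r := ((· > ·) : Fin (Fintype.card V + 1) → Fin (Fintype.card V + 1) → Prop))
      (s := fun _ : Fin (Fintype.card V + 1) => ((· < ·) : ℕ → ℕ → Prop))
      (fun _ => Nat.lt_wfRel.wf)
    set g : ℕ → (Fin (Fintype.card V + 1) → ℕ) := fun n j =>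
      (((f n).L.map fun x => Fintype.card V - x.2.darts.length).count (j : ℕ)) with hg
    have hdec : ∀ n, Pi.Lex (· > ·) (fun {_} => ((· < ·) : ℕ → ℕ → Prop))
        (g (n + 1)) (g n) := fun n => step_decrease hacyclic (hfs n)
    obtain ⟨a, ha, hmin⟩ := hwf.has_min (Set.range g) ⟨g 0, 0, rfl⟩
    obtain ⟨n₀, rfl⟩ := ha
    exact hmin (g (n₀ + 1)) ⟨n₀ + 1, rfl⟩ (hdec n₀)
  · intro s hreach hsL
    have hinv : KeptInv op e le q c ρ d s ∧
        (∀ P : Walk A o d, ρ (P.res op e q) = 0 →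
          ∃ n, Wit op e le q c d s (P.res op e q) n) ∧
        (s.ub = ⊤ ∨ ∃ P : Walk A o d, ρ (P.res op e q) = 0 ∧
          s.ub = (((c (P.res op e q)) : ℝ) : WithTop ℝ)) := by
      clear hsL
      induction hreach with
      | refl =>
        subst hinit
        refine ⟨fun k hk => absurd hk List.not_mem_nil, fun P hρ =>
          ⟨P.darts.length, Or.inr ⟨⟨o, Walk.nil o⟩, List.mem_singleton_self _, P,
            le_refl _, ?_⟩⟩, Or.inl rfl⟩
        rw [show ((Walk.nil o : Walk A o o).res op e q) = e from rfl,
          (hneutral (P.res op e q)).1]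
        exact hrefl _
      | tail hab hbc IH =>
        obtain ⟨IHk, IHw, IHu⟩ := IH
        refine ⟨kept_pres hacyclic hassoc hneutral hrefl htrans hcompL hcompR hc hρmono hB
          hbc IHk, fun P hρ => ?_, ?_⟩
        · obtain ⟨n, hw⟩ := IHw P hρ
          exact ⟨n, step_pres hacyclic hassoc hneutral hrefl htrans hcompL hcompR hc hρmono
            hB hbc IHk _ n hρ hw⟩
        · rcases hbc with ⟨P, L₁, L₂, hsL', hsL'', hkept, hub⟩ |
            ⟨v, P, L₁, L₂, hvd, hsL', hub, hrest⟩
          · by_cases h : ρ (P.res op e q) = 0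
            · rw [hub, if_pos h]
              rcases IHu with htop | ⟨P0, hP0, hub0⟩
              · right; exact ⟨P, h, by rw [htop]; exact min_eq_right le_top⟩
              · rcases le_total (c (P0.res op e q)) (c (P.res op e q)) with hle' | hle'
                · right
                  exact ⟨P0, hP0, by rw [hub0]; exact min_eq_left (WithTop.coe_le_coe.2 hle')⟩
                · right
                  exact ⟨P, h, by rw [hub0]; exact min_eq_right (WithTop.coe_le_coe.2 hle')⟩
            · rw [hub, if_neg h]; exact IHu
          · rw [hub]; exact IHu
    obtain ⟨-, hWit, hUb⟩ := hinv
    have hub_le : ∀ P : Walk A o d, ρ (P.res op e q) = 0 →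
        s.ub ≤ (((c (P.res op e q)) : ℝ) : WithTop ℝ) := by
      intro P hρ
      obtain ⟨n, hw⟩ := hWit P hρ
      rcases hw with h | ⟨x, hx, -⟩
      · exact h
      · rw [hsL] at hx; exact absurd hx List.not_mem_nil
    refine ⟨hub_le, ?_, ?_⟩
    · intro hno
      rcases hUb with h | ⟨P, hP, -⟩
      · exact h
      · exact absurd ⟨P, hP⟩ hno
    · rintro ⟨P0, hP0⟩
      rcases hUb with h | ⟨P, hP, hub⟩
      · exfalso
        have h2 := hub_le P0 hP0
        rw [h] at h2
        exact absurd (lt_of_le_of_lt h2 (WithTop.coe_lt_top _)) (lt_irrefl _)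
      · exact ⟨P, hP, hub⟩
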